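/- Suppose the price functions are affine P_j(d) = α_j − β_j d with α_j > 0, β_j > 0, each C_i is convex C¹, and A2 holds. Then the networked Cournot game with market maker has a unique Nash equilibrium (q*, f*) in the variables (q, Bf) — i.e., q* and the net injection vector r* = Bf* are unique — characterized as the maximizer of the strictly concave (in (q, r)) potential Φ over the compact convex feasible set. -/

import Mathlib

open Finset intervalIntegral

/-- Total consumption at market `j`: `(Bf + Hᵀq)_j`. -/
noncomputable def demand {n m l : ℕ} (B : Fin m → Fin l → ℝ) (H : Fin n → Fin m → ℝ)
    (f : Fin l → ℝ) (q : Fin n → ℝ) (j : Fin m) : ℝ :=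
  (∑ k, B j k * f k) + ∑ i, H i j * q i

/-- Producer `i`'s utility. -/
noncomputable def producerU {n m l : ℕ} (B : Fin m → Fin l → ℝ) (H : Fin n → Fin m → ℝ)
    (P : Fin m → ℝ → ℝ) (C : Fin n → ℝ → ℝ) (i : Fin n)
    (f : Fin l → ℝ) (q : Fin n → ℝ) : ℝ :=
  q i * (∑ j, H i j * P j (demand B H f q j)) - C i (q i)

/-- Market maker's (Marshallian welfare) utility. -/
noncomputable def makerW {n m l : ℕ} (B : Fin m → Fin l → ℝ) (H : Fin n → Fin m → ℝ)
    (P : Fin m → ℝ → ℝ) (C : Fin n → ℝ → ℝ)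
    (f : Fin l → ℝ) (q : Fin n → ℝ) : ℝ :=
  (∑ j, ∫ s in (0 : ℝ)..(demand B H f q j), P j s) - ∑ i, C i (q i)

/-- The potential `Φ(f,q) = w(f,q) − (1/2) Σ_j β j (Hᵀ q²)_j`. -/
noncomputable def potentialΦ {n m l : ℕ} (B : Fin m → Fin l → ℝ) (H : Fin n → Fin m → ℝ)
    (P : Fin m → ℝ → ℝ) (C : Fin n → ℝ → ℝ) (β : Fin m → ℝ)
    (f : Fin l → ℝ) (q : Fin n → ℝ) : ℝ :=
  makerW B H P C f q - (1 / 2) * ∑ j, β j * ∑ i, H i j * q i ^ 2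

namespace S17

noncomputable def Phic {n m l : ℕ} (B : Fin m → Fin l → ℝ) (H : Fin n → Fin m → ℝ)
    (α β : Fin m → ℝ) (C : Fin n → ℝ → ℝ) (f : Fin l → ℝ) (q : Fin n → ℝ) : ℝ :=
  (∑ j, (α j * demand B H f q j - β j * demand B H f q j ^ 2 / 2))
    - (∑ i, C i (q i)) - (1 / 2) * ∑ j, β j * ∑ i, H i j * q i ^ 2

noncomputable def Lin {n m l : ℕ} (B : Fin m → Fin l → ℝ) (H : Fin n → Fin m → ℝ)
    (α β : Fin m → ℝ) (f : Fin l → ℝ) (q : Fin n → ℝ)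
    (δf : Fin l → ℝ) (δq : Fin n → ℝ) : ℝ :=
  (∑ j, (α j - β j * demand B H f q j) * demand B H δf δq j)
    - ∑ j, β j * ∑ i, H i j * (q i * δq i)

noncomputable def Quad {n m l : ℕ} (B : Fin m → Fin l → ℝ) (H : Fin n → Fin m → ℝ)
    (β : Fin m → ℝ) (δf : Fin l → ℝ) (δq : Fin n → ℝ) : ℝ :=
  -((1 / 2) * ∑ j, β j * demand B H δf δq j ^ 2)
    - (1 / 2) * ∑ j, β j * ∑ i, H i j * δq i ^ 2

lemma integ (a b d : ℝ) : (∫ s in (0:ℝ)..d, (a - b * s)) = a * d - b * d ^ 2 / 2 := by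
  rw [intervalIntegral.integral_sub intervalIntegrable_const
    ((by fun_prop : Continuous fun s:ℝ => b * s).intervalIntegrable _ _)]
  rw [intervalIntegral.integral_const, intervalIntegral.integral_const_mul, integral_id]
  simp
  ring

lemma makerW_closed {n m l : ℕ} (B : Fin m → Fin l → ℝ) (H : Fin n → Fin m → ℝ)
    (α β : Fin m → ℝ) (C : Fin n → ℝ → ℝ) (P : Fin m → ℝ → ℝ)
    (hP : ∀ j d, P j d = α j - β j * d) (f : Fin l → ℝ) (q : Fin n → ℝ) :
    makerW B H P C f q
      = (∑ j, (α j * demand B H f q j - β j * demand B H f q j ^ 2 / 2)) - ∑ i, C i (q i) := by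
  simp only [makerW]
  congr 1
  refine Finset.sum_congr rfl fun j _ => ?_
  simp only [hP]
  exact integ (α j) (β j) _

lemma potential_closed {n m l : ℕ} (B : Fin m → Fin l → ℝ) (H : Fin n → Fin m → ℝ)
    (α β : Fin m → ℝ) (C : Fin n → ℝ → ℝ) (P : Fin m → ℝ → ℝ)
    (hP : ∀ j d, P j d = α j - β j * d) (f : Fin l → ℝ) (q : Fin n → ℝ) :
    potentialΦ B H P C β f q = Phic B H α β C f q := by
  simp only [potentialΦ, makerW_closed B H α β C P hP, Phic]

lemma maker_pot {n m l : ℕ} (B : Fin m → Fin l → ℝ) (H : Fin n → Fin m → ℝ)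
    (α β : Fin m → ℝ) (C : Fin n → ℝ → ℝ) (P : Fin m → ℝ → ℝ)
    (hP : ∀ j d, P j d = α j - β j * d) (f f' : Fin l → ℝ) (q : Fin n → ℝ) :
    Phic B H α β C f' q - Phic B H α β C f q = makerW B H P C f' q - makerW B H P C f q := by
  rw [← potential_closed B H α β C P hP, ← potential_closed B H α β C P hP]
  simp only [potentialΦ]
  ring

section
variable {n m l : ℕ} (B : Fin m → Fin l → ℝ) (H : Fin n → Fin m → ℝ)
  (α β : Fin m → ℝ) (C : Fin n → ℝ → ℝ)

lemma sum_update' {N : ℕ} (G : Fin N → ℝ → ℝ) (q : Fin N → ℝ) (i : Fin N) (x : ℝ) :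
    ∑ i', G i' (Function.update q i x i') = (∑ i', G i' (q i')) + (G i x - G i (q i)) := by
  classical
  have h : ∀ i' ∈ Finset.univ, G i' (Function.update q i x i')
      = G i' (q i') + (if i' = i then G i x - G i (q i) else 0) := by
    intro i' _
    by_cases h : i' = i
    · subst h; simp
    · simp [Function.update_of_ne h, h]
  rw [Finset.sum_congr rfl h, Finset.sum_add_distrib, Finset.sum_ite_eq' Finset.univ i]
  simp

lemma demand_update (f : Fin l → ℝ) (q : Fin n → ℝ) (i : Fin n) (x : ℝ) (j : Fin m) :
    demand B H f (Function.update q i x) j = demand B H f q j + H i j * (x - q i) := by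
  simp only [demand]
  rw [sum_update' (fun i' y => H i' j * y)]
  ring

/-- Value of `Phic` at a single-coordinate update of `q`. -/
lemma Phic_update (f : Fin l → ℝ) (q : Fin n → ℝ) (i : Fin n) (x : ℝ) :
    Phic B H α β C f (Function.update q i x)
      = Phic B H α β C f q
        + (x - q i) * (∑ j, H i j * (α j - β j * demand B H f q j))
        - ((x - q i) ^ 2 / 2) * (∑ j, β j * H i j ^ 2)
        - (C i x - C i (q i))
        - ((x ^ 2 - q i ^ 2) / 2) * (∑ j, β j * H i j) := by
  simp only [Phic]
  have e1 : (∑ j, (α j * demand B H f (Function.update q i x) j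
        - β j * demand B H f (Function.update q i x) j ^ 2 / 2))
      = (∑ j, (α j * demand B H f q j - β j * demand B H f q j ^ 2 / 2))
        + (x - q i) * (∑ j, H i j * (α j - β j * demand B H f q j))
        + (-((x - q i) ^ 2 / 2)) * (∑ j, β j * H i j ^ 2) := by
    rw [Finset.mul_sum, Finset.mul_sum, ← Finset.sum_add_distrib, ← Finset.sum_add_distrib]
    refine Finset.sum_congr rfl fun j _ => ?_
    rw [demand_update B H f q i x j]
    ring
  have e2 : (∑ j, β j * ∑ i', H i' j * Function.update q i x i' ^ 2)
      = (∑ j, β j * ∑ i', H i' j * q i' ^ 2) + (x ^ 2 - q i ^ 2) * (∑ j, β j * H i j) := by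
    rw [Finset.mul_sum, ← Finset.sum_add_distrib]
    refine Finset.sum_congr rfl fun j _ => ?_
    rw [sum_update' (fun i' y => H i' j * y ^ 2)]
    ring
  have e3 : (∑ i', C i' (Function.update q i x i'))
      = (∑ i', C i' (q i')) + (C i x - C i (q i)) := sum_update' C q i x
  rw [e1, e2, e3]
  ring

lemma producerU_closed (P : Fin m → ℝ → ℝ) (hP : ∀ j d, P j d = α j - β j * d)
    (i : Fin n) (f : Fin l → ℝ) (q : Fin n → ℝ) :
    producerU B H P C i f q
      = q i * (∑ j, H i j * (α j - β j * demand B H f q j)) - C i (q i) := by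
  simp only [producerU, hP]

lemma producerU_update (P : Fin m → ℝ → ℝ) (hP : ∀ j d, P j d = α j - β j * d)
    (i : Fin n) (f : Fin l → ℝ) (q : Fin n → ℝ) (x : ℝ) :
    producerU B H P C i f (Function.update q i x)
      = x * ((∑ j, H i j * (α j - β j * demand B H f q j))
          - (x - q i) * ∑ j, β j * H i j ^ 2) - C i x := by
  rw [producerU_closed B H α β C P hP]
  simp only [Function.update_self]
  congr 1
  have : (∑ j, H i j * (α j - β j * demand B H f (Function.update q i x) j))
      = (∑ j, H i j * (α j - β j * demand B H f q j)) - (x - q i) * ∑ j, β j * H i j ^ 2 := by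
    rw [Finset.mul_sum, ← Finset.sum_sub_distrib]
    refine Finset.sum_congr rfl fun j _ => ?_
    rw [demand_update B H f q i x j]
    ring
  rw [this]

/-- H has 0/1 entries, so `H² = H` summed against `β`. -/
lemma hsq (hH01 : ∀ i j, H i j = 0 ∨ H i j = 1) (i : Fin n) :
    (∑ j, β j * H i j ^ 2) = ∑ j, β j * H i j := by
  refine Finset.sum_congr rfl fun j _ => ?_
  rcases hH01 i j with h | h <;> simp [h]

/-- Exact-potential property for producers. -/
lemma producer_pot (hH01 : ∀ i j, H i j = 0 ∨ H i j = 1)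
    (P : Fin m → ℝ → ℝ) (hP : ∀ j d, P j d = α j - β j * d)
    (i : Fin n) (f : Fin l → ℝ) (q : Fin n → ℝ) (x : ℝ) :
    Phic B H α β C f (Function.update q i x) - Phic B H α β C f q
      = producerU B H P C i f (Function.update q i x) - producerU B H P C i f q := by
  rw [Phic_update B H α β C f q i x, producerU_update B H α β C P hP i f q x,
    producerU_closed B H α β C P hP i f q, hsq H β hH01 i]
  ring

end

section
variable {n m l : ℕ} (B : Fin m → Fin l → ℝ) (H : Fin n → Fin m → ℝ)
  (α β : Fin m → ℝ) (C : Fin n → ℝ → ℝ)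

lemma demand_add' (f δf : Fin l → ℝ) (q δq : Fin n → ℝ) (t : ℝ) (j : Fin m) :
    demand B H (fun k => f k + t * δf k) (fun i => q i + t * δq i) j
      = demand B H f q j + t * demand B H δf δq j := by
  have h1 : ∑ k, B j k * (t * δf k) = t * ∑ k, B j k * δf k := by
    rw [Finset.mul_sum]; exact Finset.sum_congr rfl fun k _ => by ring
  have h2 : ∑ i', H i' j * (t * δq i') = t * ∑ i', H i' j * δq i' := by
    rw [Finset.mul_sum]; exact Finset.sum_congr rfl fun i' _ => by ring
  simp only [demand, mul_add, Finset.sum_add_distrib, h1, h2]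
  ring

lemma sum_poly2' {N : ℕ} (A Bb Cc : Fin N → ℝ) (t : ℝ) :
    ∑ x, (A x + t * Bb x + t ^ 2 * Cc x)
      = (∑ x, A x) + t * (∑ x, Bb x) + t ^ 2 * ∑ x, Cc x := by
  rw [Finset.sum_add_distrib, Finset.sum_add_distrib, Finset.mul_sum, Finset.mul_sum]

/-- Second-order expansion of `Phic` along a line. -/
lemma Phic_expand (f δf : Fin l → ℝ) (q δq : Fin n → ℝ) (t : ℝ) :
    Phic B H α β C (fun k => f k + t * δf k) (fun i => q i + t * δq i)
      = Phic B H α β C f q + t * Lin B H α β f q δf δq + t ^ 2 * Quad B H β δf δq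
        - ((∑ i, C i (q i + t * δq i)) - ∑ i, C i (q i)) := by
  simp only [Phic]
  have e1 : (∑ j, (α j * demand B H (fun k => f k + t * δf k) (fun i => q i + t * δq i) j
        - β j * demand B H (fun k => f k + t * δf k) (fun i => q i + t * δq i) j ^ 2 / 2))
      = (∑ j, (α j * demand B H f q j - β j * demand B H f q j ^ 2 / 2))
        + t * (∑ j, (α j - β j * demand B H f q j) * demand B H δf δq j)
        + t ^ 2 * ∑ j, (-(1 / 2)) * (β j * demand B H δf δq j ^ 2) := by
    rw [← sum_poly2']
    refine Finset.sum_congr rfl fun j _ => ?_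
    rw [demand_add' B H f δf q δq t j]
    ring
  have e2 : (∑ j, β j * ∑ i, H i j * (q i + t * δq i) ^ 2)
      = (∑ j, β j * ∑ i, H i j * q i ^ 2)
        + t * (∑ j, 2 * (β j * ∑ i, H i j * (q i * δq i)))
        + t ^ 2 * ∑ j, β j * ∑ i, H i j * δq i ^ 2 := by
    rw [← sum_poly2']
    refine Finset.sum_congr rfl fun j _ => ?_
    have inner : (∑ i, H i j * (q i + t * δq i) ^ 2)
        = (∑ i, H i j * q i ^ 2) + t * (∑ i, 2 * (H i j * (q i * δq i)))
          + t ^ 2 * ∑ i, H i j * δq i ^ 2 := by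
      rw [← sum_poly2']
      exact Finset.sum_congr rfl fun i _ => by ring
    have hS : (∑ i, 2 * (H i j * (q i * δq i))) = 2 * ∑ i, H i j * (q i * δq i) :=
      (Finset.mul_sum _ _ _).symm
    rw [inner, hS]
    ring
  rw [e1, e2]
  have e3 : (∑ j, (-(1 / 2 : ℝ)) * (β j * demand B H δf δq j ^ 2))
      = (-(1 / 2)) * ∑ j, β j * demand B H δf δq j ^ 2 := (Finset.mul_sum _ _ _).symm
  have e4 : (∑ j, 2 * (β j * ∑ i, H i j * (q i * δq i)))
      = 2 * ∑ j, β j * ∑ i, H i j * (q i * δq i) := (Finset.mul_sum _ _ _).symm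
  rw [e3, e4]
  simp only [Lin, Quad]
  ring
end

section
variable {n m l : ℕ} (B : Fin m → Fin l → ℝ) (H : Fin n → Fin m → ℝ)
  (α β : Fin m → ℝ)

/-- `Lin` splits as the f-block plus the sum of single-coordinate q-blocks. -/
lemma Lin_split (f δf : Fin l → ℝ) (q δq : Fin n → ℝ) :
    Lin B H α β f q δf δq
      = (∑ j, (α j - β j * demand B H f q j) * ∑ k, B j k * δf k)
        + ∑ i, (δq i * (∑ j, H i j * (α j - β j * demand B H f q j))
            - (q i * δq i) * ∑ j, β j * H i j) := by
  simp only [Lin]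
  have h1 : (∑ j, (α j - β j * demand B H f q j) * demand B H δf δq j)
      = (∑ j, (α j - β j * demand B H f q j) * ∑ k, B j k * δf k)
        + ∑ j, ∑ i, (α j - β j * demand B H f q j) * (H i j * δq i) := by
    rw [← Finset.sum_add_distrib]
    refine Finset.sum_congr rfl fun j _ => ?_
    simp only [demand, mul_add, Finset.mul_sum]
  have h2 : (∑ j, ∑ i, (α j - β j * demand B H f q j) * (H i j * δq i))
      = ∑ i, δq i * ∑ j, H i j * (α j - β j * demand B H f q j) := by
    rw [Finset.sum_comm]
    refine Finset.sum_congr rfl fun i _ => ?_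
    rw [Finset.mul_sum]
    exact Finset.sum_congr rfl fun j _ => by ring
  have h3 : (∑ j, β j * ∑ i, H i j * (q i * δq i))
      = ∑ i, (q i * δq i) * ∑ j, β j * H i j := by
    have : ∀ j, β j * ∑ i, H i j * (q i * δq i) = ∑ i, (q i * δq i) * (β j * H i j) := by
      intro j
      rw [Finset.mul_sum]
      exact Finset.sum_congr rfl fun i _ => by ring
    rw [Finset.sum_congr rfl fun j _ => this j, Finset.sum_comm]
    exact Finset.sum_congr rfl fun i _ => (Finset.mul_sum _ _ _).symm
  rw [h1, h2, h3, Finset.sum_sub_distrib]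
  ring

lemma Quad_nonpos (hβ : ∀ j, 0 ≤ β j) (hH0 : ∀ i j, 0 ≤ H i j)
    (δf : Fin l → ℝ) (δq : Fin n → ℝ) :
    Quad B H β δf δq ≤ 0 := by
  have h1 : 0 ≤ ∑ j, β j * demand B H δf δq j ^ 2 :=
    Finset.sum_nonneg fun j _ => mul_nonneg (hβ j) (sq_nonneg _)
  have h2 : 0 ≤ ∑ j, β j * ∑ i, H i j * δq i ^ 2 :=
    Finset.sum_nonneg fun j _ => mul_nonneg (hβ j)
      (Finset.sum_nonneg fun i _ => mul_nonneg (hH0 i j) (sq_nonneg _))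
  simp only [Quad]
  nlinarith

lemma row_one (hH01 : ∀ i j, H i j = 0 ∨ H i j = 1) (hH1 : ∀ i, ∑ j, H i j = 1)
    (i : Fin n) : ∃ j, H i j = 1 := by
  by_contra h
  push_neg at h
  have h0 : ∀ j, H i j = 0 := fun j => (hH01 i j).resolve_right (h j)
  have h1 := hH1 i
  rw [Finset.sum_eq_zero fun j _ => h0 j] at h1
  exact absurd h1 (by norm_num)

/-- If the quadratic form vanishes (i.e. `Quad ≥ 0`), then `δq = 0` and `B δf = 0`. -/
lemma Quad_zero (hβ : ∀ j, 0 < β j) (hH01 : ∀ i j, H i j = 0 ∨ H i j = 1)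
    (hH1 : ∀ i, ∑ j, H i j = 1)
    (δf : Fin l → ℝ) (δq : Fin n → ℝ) (hQ : 0 ≤ Quad B H β δf δq) :
    (∀ i, δq i = 0) ∧ (∀ j, ∑ k, B j k * δf k = 0) := by
  have hH0 : ∀ i j, 0 ≤ H i j := fun i j => by rcases hH01 i j with h | h <;> simp [h]
  have h1 : 0 ≤ ∑ j, β j * demand B H δf δq j ^ 2 :=
    Finset.sum_nonneg fun j _ => mul_nonneg (hβ j).le (sq_nonneg _)
  have h2 : 0 ≤ ∑ j, β j * ∑ i, H i j * δq i ^ 2 :=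
    Finset.sum_nonneg fun j _ => mul_nonneg (hβ j).le
      (Finset.sum_nonneg fun i _ => mul_nonneg (hH0 i j) (sq_nonneg _))
  have hQ' : Quad B H β δf δq ≤ 0 := Quad_nonpos B H β (fun j => (hβ j).le) hH0 δf δq
  simp only [Quad] at hQ
  have hz1 : (∑ j, β j * demand B H δf δq j ^ 2) = 0 := by nlinarith
  have hz2 : (∑ j, β j * ∑ i, H i j * δq i ^ 2) = 0 := by nlinarith
  have hd0 : ∀ j, demand B H δf δq j = 0 := by
    intro j
    have := (Finset.sum_eq_zero_iff_of_nonneg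
      (fun j _ => mul_nonneg (hβ j).le (sq_nonneg (demand B H δf δq j)))).mp hz1 j (mem_univ j)
    have hb := (hβ j).ne'
    have : demand B H δf δq j ^ 2 = 0 := by
      rcases mul_eq_zero.mp this with h | h
      · exact absurd h hb
      · exact h
    exact pow_eq_zero_iff (by norm_num) |>.mp this
  have hq0 : ∀ i, δq i = 0 := by
    intro i
    obtain ⟨j, hj⟩ := row_one H hH01 hH1 i
    have hterm := (Finset.sum_eq_zero_iff_of_nonneg
      (fun j _ => mul_nonneg (hβ j).le
        (Finset.sum_nonneg fun i _ => mul_nonneg (hH0 i j) (sq_nonneg _)))).mp hz2 j (mem_univ j)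
    have hinner : (∑ i, H i j * δq i ^ 2) = 0 := by
      rcases mul_eq_zero.mp hterm with h | h
      · exact absurd h (hβ j).ne'
      · exact h
    have := (Finset.sum_eq_zero_iff_of_nonneg
      (fun i _ => mul_nonneg (hH0 i j) (sq_nonneg (δq i)))).mp hinner i (mem_univ i)
    rw [hj, one_mul] at this
    exact pow_eq_zero_iff (by norm_num) |>.mp this
  refine ⟨hq0, fun j => ?_⟩
  have := hd0 j
  simp only [demand] at this
  have hz : (∑ i, H i j * δq i) = 0 := Finset.sum_eq_zero fun i _ => by rw [hq0 i, mul_zero]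
  linarith

end

section
variable {n m l : ℕ}

/-- A Nash equilibrium globally maximizes `Phic` over the feasible set. -/
lemma nash_max (B : Fin m → Fin l → ℝ) (H : Fin n → Fin m → ℝ)
    (c : Fin l → ℝ) (α β : Fin m → ℝ) (hβ : ∀ j, 0 < β j)
    (C : Fin n → ℝ → ℝ) (hC : ∀ i, ConvexOn ℝ Set.univ (C i))
    (hH01 : ∀ i j, H i j = 0 ∨ H i j = 1)
    (P : Fin m → ℝ → ℝ) (hP : ∀ j d, P j d = α j - β j * d)
    (f : Fin l → ℝ) (q : Fin n → ℝ) (hq : ∀ i, 0 ≤ q i) (hf : ∀ k, |f k| ≤ c k)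
    (hprod : ∀ (i : Fin n) (x : ℝ), 0 ≤ x →
        producerU B H P C i f (Function.update q i x) ≤ producerU B H P C i f q)
    (hmaker : ∀ f' : Fin l → ℝ, (∀ k, |f' k| ≤ c k) →
        makerW B H P C f' q ≤ makerW B H P C f q)
    (f' : Fin l → ℝ) (q' : Fin n → ℝ) (hq' : ∀ i, 0 ≤ q' i) (hf' : ∀ k, |f' k| ≤ c k) :
    Phic B H α β C f' q' ≤ Phic B H α β C f q := by
  have hH0 : ∀ i j, 0 ≤ H i j := fun i j => by rcases hH01 i j with h | h <;> simp [h]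
  -- abbreviations
  set δf : Fin l → ℝ := fun k => f' k - f k with hδf
  set δq : Fin n → ℝ := fun i => q' i - q i with hδq
  have S0def : True := trivial
  -- Nash in terms of the potential
  have hΦprod : ∀ (i : Fin n) (x : ℝ), 0 ≤ x →
      Phic B H α β C f (Function.update q i x) ≤ Phic B H α β C f q := by
    intro i x hx
    have h1 := hprod i x hx
    have h2 := producer_pot B H α β C hH01 P hP i f q x
    linarith
  -- producer block inequalities along the segment
  have hblock_i : ∀ (i : Fin n) (t : ℝ), 0 < t → t ≤ 1 →
      t * (δq i * (∑ j, H i j * (α j - β j * demand B H f q j)) - (q i * δq i) * (∑ j, β j * H i j)) + t ^ 2 * (-(δq i ^ 2) * (∑ j, β j * H i j))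
        - (C i (q i + t * δq i) - C i (q i)) ≤ 0 := by
    intro i t ht0 ht1
    have hx : 0 ≤ q i + t * δq i := by
      have h1 := hq i; have h2 := hq' i
      have : q i + t * δq i = (1 - t) * q i + t * q' i := by simp only [hδq]; ring
      rw [this]
      have := mul_nonneg (by linarith : (0:ℝ) ≤ 1 - t) h1
      have := mul_nonneg ht0.le h2
      linarith
    have hΦ := hΦprod i (q i + t * δq i) hx
    rw [Phic_update B H α β C f q i (q i + t * δq i), hsq H β hH01 i] at hΦ
    have e : t * (δq i * (∑ j, H i j * (α j - β j * demand B H f q j)) - (q i * δq i) * (∑ j, β j * H i j)) + t ^ 2 * (-(δq i ^ 2) * (∑ j, β j * H i j))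
          - (C i (q i + t * δq i) - C i (q i))
        = (q i + t * δq i - q i) * (∑ j, H i j * (α j - β j * demand B H f q j))
          - ((q i + t * δq i - q i) ^ 2 / 2) * (∑ j, β j * H i j)
          - (C i (q i + t * δq i) - C i (q i))
          - (((q i + t * δq i) ^ 2 - q i ^ 2) / 2) * (∑ j, β j * H i j) := by ring
    rw [e]
    linarith [hΦ]
  -- f-block inequality along the segment
  have hblock_f : ∀ t : ℝ, 0 < t → t ≤ 1 →
      t * Lin B H α β f q δf (fun _ => 0) + t ^ 2 * Quad B H β δf (fun _ => 0) ≤ 0 := by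
    intro t ht0 ht1
    have hfeas : ∀ k, |f k + t * δf k| ≤ c k := by
      intro k
      have : f k + t * δf k = (1 - t) * f k + t * f' k := by simp only [hδf]; ring
      rw [this]
      calc |(1 - t) * f k + t * f' k| ≤ |(1 - t) * f k| + |t * f' k| := abs_add_le _ _
        _ = (1 - t) * |f k| + t * |f' k| := by
            rw [abs_mul, abs_mul, abs_of_nonneg (by linarith : (0:ℝ) ≤ 1 - t),
              abs_of_nonneg ht0.le]
        _ ≤ (1 - t) * c k + t * c k := by
            have := hf k; have := hf' k
            have h1 := mul_le_mul_of_nonneg_left (hf k) (by linarith : (0:ℝ) ≤ 1 - t)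
            have h2 := mul_le_mul_of_nonneg_left (hf' k) ht0.le
            linarith
        _ = c k := by ring
    have hW := hmaker (fun k => f k + t * δf k) hfeas
    have hpot := maker_pot B H α β C P hP f (fun k => f k + t * δf k) q
    have hΦ : Phic B H α β C (fun k => f k + t * δf k) q ≤ Phic B H α β C f q := by linarith
    have hexp := Phic_expand B H α β C f δf q (fun _ => 0) t
    have hqid : (fun i => q i + t * (fun (_ : Fin n) => (0:ℝ)) i) = q := by funext i; simp
    rw [hqid] at hexp
    have hCid : (∑ i, C i (q i + t * (fun (_ : Fin n) => (0:ℝ)) i)) = ∑ i, C i (q i) := by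
      simp
    rw [hCid] at hexp
    linarith [hexp ▸ hΦ]
  -- convexity of the costs
  have hconv : ∀ (i : Fin n) (t : ℝ), 0 ≤ t → t ≤ 1 →
      C i (q i + t * δq i) ≤ (1 - t) * C i (q i) + t * C i (q' i) := by
    intro i t ht0 ht1
    have hpt : (1 - t) * q i + t * q' i = q i + t * δq i := by simp only [hδq]; ring
    have := (hC i).2 (Set.mem_univ (q i)) (Set.mem_univ (q' i))
      (by linarith : (0:ℝ) ≤ 1 - t) ht0 (by ring)
    simpa [smul_eq_mul, hpt] using this
  -- the summed inequality
  set Lf : ℝ := Lin B H α β f q δf (fun _ => 0) with hLf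
  set Qf : ℝ := Quad B H β δf (fun _ => 0) with hQf
  set Qb : ℝ := Qf + ∑ i, (-(δq i ^ 2) * (∑ j, β j * H i j)) with hQb
  set X : ℝ := ∑ i, (C i (q' i) - C i (q i)) with hX
  have hLsplit : Lin B H α β f q δf δq = Lf + ∑ i, (δq i * (∑ j, H i j * (α j - β j * demand B H f q j)) - (q i * δq i) * (∑ j, β j * H i j)) := by
    rw [Lin_split B H α β f δf q δq]
    have : Lf = ∑ j, (α j - β j * demand B H f q j) * ∑ k, B j k * δf k := by
      rw [hLf, Lin_split B H α β f δf q (fun _ => 0)]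
      simp
    rw [this]
  have key : ∀ t : ℝ, 0 < t → t ≤ 1 → Lin B H α β f q δf δq + t * Qb ≤ X := by
    intro t ht0 ht1
    have hsum : (∑ i, (t * (δq i * (∑ j, H i j * (α j - β j * demand B H f q j)) - (q i * δq i) * (∑ j, β j * H i j))
          + t ^ 2 * (-(δq i ^ 2) * (∑ j, β j * H i j)) - (C i (q i + t * δq i) - C i (q i)))) ≤ 0 :=
      Finset.sum_nonpos fun i _ => hblock_i i t ht0 ht1
    rw [Finset.sum_sub_distrib, Finset.sum_add_distrib, ← Finset.mul_sum, ← Finset.mul_sum,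
      Finset.sum_sub_distrib, Finset.sum_sub_distrib] at hsum
    have hCsum : (∑ i, C i (q i + t * δq i)) - (∑ i, C i (q i)) ≤ t * X := by
      have h1 : (∑ i, C i (q i + t * δq i)) ≤ ∑ i, ((1 - t) * C i (q i) + t * C i (q' i)) :=
        Finset.sum_le_sum fun i _ => hconv i t ht0.le ht1
      rw [Finset.sum_add_distrib, ← Finset.mul_sum, ← Finset.mul_sum] at h1
      rw [hX, Finset.sum_sub_distrib]
      have e : (1 - t) * (∑ i, C i (q i)) = (∑ i, C i (q i)) - t * ∑ i, C i (q i) := by ring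
      rw [e] at h1
      linarith
    have hfb := hblock_f t ht0 ht1
    -- combine
    have hcomb : t * (Lf + ∑ i, (δq i * (∑ j, H i j * (α j - β j * demand B H f q j)) - (q i * δq i) * (∑ j, β j * H i j)))
        + t ^ 2 * Qb ≤ t * X := by
      rw [hQb, Finset.sum_sub_distrib]
      linarith [hsum, hfb, hCsum]
    have h2 : t * ((Lf + ∑ i, (δq i * (∑ j, H i j * (α j - β j * demand B H f q j)) - (q i * δq i) * (∑ j, β j * H i j))) + t * Qb) ≤ t * X := by
      have e : t * ((Lf + ∑ i, (δq i * (∑ j, H i j * (α j - β j * demand B H f q j)) - (q i * δq i) * (∑ j, β j * H i j))) + t * Qb)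
          = t * (Lf + ∑ i, (δq i * (∑ j, H i j * (α j - β j * demand B H f q j)) - (q i * δq i) * (∑ j, β j * H i j))) + t ^ 2 * Qb := by ring
      rw [e]
      exact hcomb
    have h3 := le_of_mul_le_mul_left h2 ht0
    rw [hLsplit]
    linarith [h3]
  -- epsilon argument: Lin ≤ X
  have hLin_le : Lin B H α β f q δf δq ≤ X := by
    refine le_of_forall_pos_le_add fun ε hε => ?_
    set t : ℝ := min 1 (ε / (1 + |Qb|)) with htdef
    have ht0 : 0 < t := lt_min one_pos (div_pos hε (by positivity))
    have ht1 : t ≤ 1 := min_le_left _ _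
    have hk := key t ht0 ht1
    have habs : t * (-Qb) ≤ ε := by
      calc t * (-Qb) ≤ t * |Qb| := by
            have := neg_le_abs Qb
            exact mul_le_mul_of_nonneg_left this ht0.le
        _ ≤ (ε / (1 + |Qb|)) * |Qb| :=
            mul_le_mul_of_nonneg_right (min_le_right _ _) (abs_nonneg _)
        _ ≤ ε := by
            rw [div_mul_eq_mul_div, div_le_iff₀ (by positivity : (0:ℝ) < 1 + |Qb|)]
            nlinarith [abs_nonneg Qb, hε.le]
    linarith
  -- final chain
  have h1f : (fun k => f k + 1 * δf k) = f' := by funext k; simp [hδf]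
  have h1q : (fun i => q i + 1 * δq i) = q' := by funext i; simp [hδq]
  have hval := Phic_expand B H α β C f δf q δq 1
  rw [h1f, h1q] at hval
  have hCone : (∑ i, C i (q i + 1 * δq i)) = ∑ i, C i (q' i) :=
    Finset.sum_congr rfl fun i _ => by simp [hδq]
  rw [hCone] at hval
  have hQneg := Quad_nonpos B H β (fun j => (hβ j).le) hH0 δf δq
  have hXe : (∑ i, C i (q' i)) - (∑ i, C i (q i)) = X := by
    rw [hX, Finset.sum_sub_distrib]
  rw [hXe] at hval
  nlinarith [hval, hLin_le, hQneg]

end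

section
variable {n m l : ℕ}

/-- Concavity of `Phic` along segments. -/
lemma Phic_concave (B : Fin m → Fin l → ℝ) (H : Fin n → Fin m → ℝ)
    (α β : Fin m → ℝ) (hβ : ∀ j, 0 ≤ β j) (hH0 : ∀ i j, 0 ≤ H i j)
    (C : Fin n → ℝ → ℝ) (hC : ∀ i, ConvexOn ℝ Set.univ (C i))
    (f f' : Fin l → ℝ) (q q' : Fin n → ℝ) (t : ℝ) (ht0 : 0 ≤ t) (ht1 : t ≤ 1) :
    (1 - t) * Phic B H α β C f q + t * Phic B H α β C f' q'
      ≤ Phic B H α β C (fun k => f k + t * (f' k - f k)) (fun i => q i + t * (q' i - q i)) := by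
  have hexp := Phic_expand B H α β C f (fun k => f' k - f k) q (fun i => q' i - q i) t
  have hexp1 := Phic_expand B H α β C f (fun k => f' k - f k) q (fun i => q' i - q i) 1
  have h1f : (fun k => f k + 1 * (f' k - f k)) = f' := by funext k; ring
  have h1q : (fun i => q i + 1 * (q' i - q i)) = q' := by funext i; ring
  rw [h1f, h1q] at hexp1
  have hCone : (∑ i, C i (q i + 1 * (q' i - q i))) = ∑ i, C i (q' i) :=
    Finset.sum_congr rfl fun i _ => by norm_num
  rw [hCone] at hexp1
  have hcv : (∑ i, C i (q i + t * (q' i - q i)))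
      ≤ (1 - t) * (∑ i, C i (q i)) + t * ∑ i, C i (q' i) := by
    have h1 : ∀ i, C i (q i + t * (q' i - q i)) ≤ (1 - t) * C i (q i) + t * C i (q' i) := by
      intro i
      have hpt : (1 - t) * q i + t * q' i = q i + t * (q' i - q i) := by ring
      have := (hC i).2 (Set.mem_univ (q i)) (Set.mem_univ (q' i))
        (by linarith : (0:ℝ) ≤ 1 - t) ht0 (by ring)
      simpa [smul_eq_mul, hpt] using this
    have h2 : (∑ i, C i (q i + t * (q' i - q i)))
        ≤ ∑ i, ((1 - t) * C i (q i) + t * C i (q' i)) := Finset.sum_le_sum fun i _ => h1 i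
    rw [Finset.sum_add_distrib, ← Finset.mul_sum, ← Finset.mul_sum] at h2
    exact h2
  have hQ := Quad_nonpos B H β hβ hH0 (fun k => f' k - f k) (fun i => q' i - q i)
  have h3 : 0 ≤ (t * (1 - t)) * (-(Quad B H β (fun k => f' k - f k) (fun i => q' i - q i))) :=
    mul_nonneg (mul_nonneg ht0 (by linarith)) (by linarith)
  rw [hexp, hexp1]
  linarith [hcv, h3]

/-- Two maximizers have the same `q` and the same `Bf`. -/
lemma max_unique (B : Fin m → Fin l → ℝ) (H : Fin n → Fin m → ℝ)
    (α β : Fin m → ℝ) (hβ : ∀ j, 0 < β j)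
    (hH01 : ∀ i j, H i j = 0 ∨ H i j = 1) (hH1 : ∀ i, ∑ j, H i j = 1)
    (C : Fin n → ℝ → ℝ) (hC : ∀ i, ConvexOn ℝ Set.univ (C i))
    (f f' : Fin l → ℝ) (q q' : Fin n → ℝ)
    (heq : Phic B H α β C f' q' = Phic B H α β C f q)
    (hmid : Phic B H α β C (fun k => f k + (1/2) * (f' k - f k))
        (fun i => q i + (1/2) * (q' i - q i)) ≤ Phic B H α β C f q) :
    q = q' ∧ (∀ j, ∑ k, B j k * f' k = ∑ k, B j k * f k) := by
  have hexp := Phic_expand B H α β C f (fun k => f' k - f k) q (fun i => q' i - q i) (1/2)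
  have hexp1 := Phic_expand B H α β C f (fun k => f' k - f k) q (fun i => q' i - q i) 1
  have h1f : (fun k => f k + 1 * (f' k - f k)) = f' := by funext k; ring
  have h1q : (fun i => q i + 1 * (q' i - q i)) = q' := by funext i; ring
  rw [h1f, h1q] at hexp1
  have hCone : (∑ i, C i (q i + 1 * (q' i - q i))) = ∑ i, C i (q' i) :=
    Finset.sum_congr rfl fun i _ => by norm_num
  rw [hCone] at hexp1
  have hcv : (∑ i, C i (q i + (1/2) * (q' i - q i)))
      ≤ (1 - (1/2)) * (∑ i, C i (q i)) + (1/2) * ∑ i, C i (q' i) := by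
    have h1 : ∀ i, C i (q i + (1/2) * (q' i - q i))
        ≤ (1 - (1/2)) * C i (q i) + (1/2) * C i (q' i) := by
      intro i
      have hpt : (1 - (1/2 : ℝ)) * q i + (1/2) * q' i = q i + (1/2) * (q' i - q i) := by ring
      have := (hC i).2 (Set.mem_univ (q i)) (Set.mem_univ (q' i))
        (by norm_num : (0:ℝ) ≤ 1 - 1/2) (by norm_num : (0:ℝ) ≤ (1/2:ℝ)) (by ring)
      simp only [smul_eq_mul] at this
      rw [hpt] at this
      exact this
    have h2 := Finset.sum_le_sum fun i (_ : i ∈ Finset.univ) => h1 i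
    rw [Finset.sum_add_distrib, ← Finset.mul_sum, ← Finset.mul_sum] at h2
    exact h2
  have hQ0 : 0 ≤ Quad B H β (fun k => f' k - f k) (fun i => q' i - q i) := by
    rw [hexp] at hmid
    linarith [hexp1, hcv]
  obtain ⟨hq0, hf0⟩ := Quad_zero B H β hβ hH01 hH1 _ _ hQ0
  constructor
  · funext i
    have := hq0 i
    have : q' i - q i = 0 := this
    linarith
  · intro j
    have := hf0 j
    have h2 : (∑ k, B j k * (f' k - f k)) = (∑ k, B j k * f' k) - ∑ k, B j k * f k := by
      rw [← Finset.sum_sub_distrib]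
      exact Finset.sum_congr rfl fun k _ => by ring
    rw [h2] at this
    linarith

end

section
variable {n m l : ℕ}

lemma Phic_continuous (B : Fin m → Fin l → ℝ) (H : Fin n → Fin m → ℝ)
    (α β : Fin m → ℝ) (C : Fin n → ℝ → ℝ) (hC1 : ∀ i, Differentiable ℝ (C i)) :
    Continuous fun p : (Fin l → ℝ) × (Fin n → ℝ) => Phic B H α β C p.1 p.2 := by
  have hCc : ∀ i, Continuous (C i) := fun i => (hC1 i).continuous
  have hd : ∀ j, Continuous fun p : (Fin l → ℝ) × (Fin n → ℝ) => demand B H p.1 p.2 j := by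
    intro j
    apply Continuous.add
    · exact continuous_finset_sum _ fun k _ =>
        (continuous_const.mul ((continuous_apply k).comp continuous_fst))
    · exact continuous_finset_sum _ fun i _ =>
        (continuous_const.mul ((continuous_apply i).comp continuous_snd))
  unfold Phic
  apply Continuous.sub
  apply Continuous.sub
  · exact continuous_finset_sum _ fun j _ => by
      have := hd j
      fun_prop
  · exact continuous_finset_sum _ fun i _ =>
      (hCc i).comp ((continuous_apply i).comp continuous_snd)
  · exact continuous_const.mul <| continuous_finset_sum _ fun j _ =>
      continuous_const.mul <| continuous_finset_sum _ fun i _ =>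
        continuous_const.mul <| (((continuous_apply i).comp continuous_snd).pow 2)

/-- Existence of a global maximizer of `Phic` over the feasible set. -/
lemma exists_max (B : Fin m → Fin l → ℝ) (H : Fin n → Fin m → ℝ)
    (c : Fin l → ℝ) (hc : ∀ k, 0 ≤ c k)
    (α β : Fin m → ℝ) (hα : ∀ j, 0 < α j) (hβ : ∀ j, 0 < β j)
    (C : Fin n → ℝ → ℝ) (hC : ∀ i, ConvexOn ℝ Set.univ (C i))
    (hC1 : ∀ i, Differentiable ℝ (C i))
    (hH01 : ∀ i j, H i j = 0 ∨ H i j = 1) (hH1 : ∀ i, ∑ j, H i j = 1) :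
    ∃ (fs : Fin l → ℝ) (qs : Fin n → ℝ), (∀ i, 0 ≤ qs i) ∧ (∀ k, |fs k| ≤ c k) ∧
      ∀ (f : Fin l → ℝ) (q : Fin n → ℝ), (∀ i, 0 ≤ q i) → (∀ k, |f k| ≤ c k) →
        Phic B H α β C f q ≤ Phic B H α β C fs qs := by
  classical
  have hH0 : ∀ i j, 0 ≤ H i j := fun i j => by rcases hH01 i j with h | h <;> simp [h]
  set D : Fin m → ℝ := fun j => ∑ k, |B j k| * c k with hD
  set A : Fin n → ℝ := fun i => ∑ j, H i j * (α j + β j * D j) with hA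
  set M : Fin n → ℝ := fun i => |C i 1 - C i 0| with hM
  set Sb : Fin n → ℝ := fun i => ∑ j, β j * H i j with hSb
  have hD0 : ∀ j, 0 ≤ D j := fun j =>
    Finset.sum_nonneg fun k _ => mul_nonneg (abs_nonneg _) (hc k)
  have hA0 : ∀ i, 0 ≤ A i := fun i =>
    Finset.sum_nonneg fun j _ => mul_nonneg (hH0 i j)
      (by nlinarith [hα j, (hβ j).le, hD0 j, mul_nonneg (hβ j).le (hD0 j)])
  have hSb0 : ∀ i, 0 < Sb i := by
    intro i
    obtain ⟨j, hj⟩ := row_one H hH01 hH1 i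
    refine Finset.sum_pos' (fun j' _ => mul_nonneg (hβ j').le (hH0 i j')) ⟨j, Finset.mem_univ j, ?_⟩
    rw [hj, mul_one]; exact hβ j
  set T : Fin n → ℝ := fun i => (A i + M i + 1) / Sb i with hT
  have hT0 : ∀ i, 0 < T i := fun i =>
    div_pos (by have := hA0 i; have := abs_nonneg (C i 1 - C i 0); simp only [hM]; linarith)
      (hSb0 i)
  set R0 : ℝ := 1 + ∑ i, T i with hR0
  have hR01 : 1 ≤ R0 := by
    have : 0 ≤ ∑ i, T i := Finset.sum_nonneg fun i _ => (hT0 i).le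
    simp only [hR0]; linarith
  have hTR0 : ∀ i, T i ≤ R0 := by
    intro i
    have h1 : T i ≤ ∑ i', T i' :=
      Finset.single_le_sum (fun i' _ => (hT0 i').le) (Finset.mem_univ i)
    simp only [hR0]; linarith
  set R : ℝ := R0 + 1 with hR
  have hRpos : 0 ≤ R := by simp only [hR]; linarith
  -- compact feasible set
  set K : Set ((Fin l → ℝ) × (Fin n → ℝ)) :=
    (Set.pi Set.univ fun k => Set.Icc (-(c k)) (c k)) ×ˢ
      (Set.pi Set.univ fun i => Set.Icc (0:ℝ) R) with hK
  have hKc : IsCompact K :=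
    (isCompact_univ_pi fun k => isCompact_Icc).prod (isCompact_univ_pi fun i => isCompact_Icc)
  have hKne : K.Nonempty := by
    refine ⟨(fun _ => 0, fun _ => 0), ⟨fun k _ => ?_, fun i _ => ?_⟩⟩
    · exact ⟨by simpa using hc k, hc k⟩
    · exact ⟨le_refl 0, hRpos⟩
  obtain ⟨p, hpK, hpmax⟩ := hKc.exists_isMaxOn hKne
    (Phic_continuous B H α β C hC1).continuousOn
  rw [isMaxOn_iff] at hpmax
  obtain ⟨hpf, hpq⟩ := hpK
  set fs : Fin l → ℝ := p.1 with hfs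
  set qs : Fin n → ℝ := p.2 with hqs
  have hfsK : ∀ k, |fs k| ≤ c k := by
    intro k
    have := hpf k (Set.mem_univ k)
    rw [abs_le]; exact ⟨this.1, this.2⟩
  have hqs0 : ∀ i, 0 ≤ qs i := fun i => (hpq i (Set.mem_univ i)).1
  have hqsR : ∀ i, qs i ≤ R := fun i => (hpq i (Set.mem_univ i)).2
  have hmaxK : ∀ (f : Fin l → ℝ) (q : Fin n → ℝ), (∀ k, |f k| ≤ c k) →
      (∀ i, 0 ≤ q i ∧ q i ≤ R) → Phic B H α β C f q ≤ Phic B H α β C fs qs := by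
    intro f q hf hq
    exact hpmax (f, q) ⟨fun k _ => by have := hf k; rw [abs_le] at this; exact ⟨this.1, this.2⟩,
      fun i _ => hq i⟩
  -- the maximizer has qs ≤ R0
  have hqsR0 : ∀ i, qs i ≤ R0 := by
    intro i
    by_contra hcon
    push_neg at hcon
    set t : ℝ := qs i with htdef
    have ht1 : 1 ≤ t := le_trans hR01 hcon.le
    set q0 : Fin n → ℝ := Function.update qs i 0 with hq0
    have hq00 : ∀ i', 0 ≤ q0 i' := by
      intro i'
      by_cases h : i' = i
      · subst h; simp [hq0]
      · simp only [hq0, Function.update_of_ne h]; exact hqs0 i'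
    have hq0R : ∀ i', q0 i' ≤ R := by
      intro i'
      by_cases h : i' = i
      · subst h; simp [hq0, hRpos]
      · simp only [hq0, Function.update_of_ne h]; exact hqsR i'
    have hmax0 : Phic B H α β C fs q0 ≤ Phic B H α β C fs qs :=
      hmaxK fs q0 hfsK fun i' => ⟨hq00 i', hq0R i'⟩
    -- value of Phic at qs as an update of q0
    have hupd : Function.update q0 i t = qs := by
      funext i'
      by_cases h : i' = i
      · subst h; simp [hq0, htdef]
      · simp [hq0, Function.update_of_ne h]
    have hval := Phic_update B H α β C fs q0 i t
    rw [hupd, hsq H β hH01 i] at hval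
    have hq0i : q0 i = 0 := by simp [hq0]
    rw [hq0i] at hval
    -- bound the linear coefficient
    have hdembound : ∀ j, -(D j) ≤ demand B H fs q0 j := by
      intro j
      have h1 : -(D j) ≤ ∑ k, B j k * fs k := by
        have : ∀ k, -( |B j k| * c k) ≤ B j k * fs k := by
          intro k
          have h2 : |B j k * fs k| ≤ |B j k| * c k := by
            rw [abs_mul]
            exact mul_le_mul_of_nonneg_left (hfsK k) (abs_nonneg _)
          have := neg_abs_le (B j k * fs k)
          linarith
        have h3 := Finset.sum_le_sum fun k (_ : k ∈ Finset.univ) => this k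
        rw [Finset.sum_neg_distrib] at h3
        simpa [hD] using h3
      have h2 : (0:ℝ) ≤ ∑ i', H i' j * q0 i' :=
        Finset.sum_nonneg fun i' _ => mul_nonneg (hH0 i' j) (hq00 i')
      simp only [demand]
      linarith
    have hS0bound : (∑ j, H i j * (α j - β j * demand B H fs q0 j)) ≤ A i := by
      simp only [hA]
      refine Finset.sum_le_sum fun j _ => ?_
      refine mul_le_mul_of_nonneg_left ?_ (hH0 i j)
      have h1 := hdembound j
      have h2 := (hβ j).le
      nlinarith
    have ht0' : (0:ℝ) < t := lt_of_lt_of_le one_pos ht1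
    -- bound the cost decrease
    have hCbound : -(C i t - C i 0) ≤ t * M i := by
      have ha : (0:ℝ) ≤ 1 - 1/t := by
        rw [sub_nonneg]
        exact (div_le_one ht0').mpr ht1
      have hb : (0:ℝ) ≤ 1/t := by positivity
      have hab : (1 - 1/t) + 1/t = 1 := by ring
      have h := (hC i).2 (Set.mem_univ (0:ℝ)) (Set.mem_univ t) ha hb hab
      simp only [smul_eq_mul] at h
      have hpt : (1 - 1/t) * (0:ℝ) + (1/t) * t = 1 := by field_simp; ring
      rw [hpt] at h
      have h3 : t * ((1 - 1/t) * C i 0 + (1/t) * C i t) = (t - 1) * C i 0 + C i t := by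
        field_simp
      have h2 : t * C i 1 ≤ (t - 1) * C i 0 + C i t := by
        have h4 := mul_le_mul_of_nonneg_left h ht0'.le
        rw [h3] at h4
        exact h4
      have hkey := mul_nonneg ht0'.le
        (by simp only [hM]; linarith [neg_abs_le (C i 1 - C i 0)] : (0:ℝ) ≤ C i 1 - C i 0 + M i)
      nlinarith [h2, hkey]
    -- contradiction
    have h5 : A i + M i + 1 < t * Sb i := by
      have hTlt : T i < t := lt_of_le_of_lt (hTR0 i) hcon
      rw [hT] at hTlt
      exact (div_lt_iff₀ (hSb0 i)).mp hTlt
    have h7 : A i + M i - t * Sb i < -1 := by linarith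
    have h8 : t * (A i + M i - t * Sb i) < t * (-1) := by
      exact mul_lt_mul_of_pos_left h7 ht0'
    have h9 : t * (∑ j, H i j * (α j - β j * demand B H fs q0 j)) ≤ t * A i :=
      mul_le_mul_of_nonneg_left hS0bound ht0'.le
    have hSbi : (∑ j, β j * H i j) = Sb i := by rw [hSb]
    rw [hSbi] at hval
    linarith [hval, hmax0, h8, h9, hCbound, ht0']
  -- global maximality
  refine ⟨fs, qs, hqs0, hfsK, ?_⟩
  intro f q hq hf
  set Sq : ℝ := ∑ i, q i with hSq
  have hSq0 : 0 ≤ Sq := Finset.sum_nonneg fun i _ => hq i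
  set t : ℝ := min 1 (1/(1+Sq)) with htdef
  have ht0 : 0 < t := lt_min one_pos (by positivity)
  have ht1 : t ≤ 1 := min_le_left _ _
  have hcombf : ∀ k, |fs k + t * (f k - fs k)| ≤ c k := by
    intro k
    have heq : fs k + t * (f k - fs k) = (1 - t) * fs k + t * f k := by ring
    rw [heq]
    calc |(1 - t) * fs k + t * f k| ≤ |(1 - t) * fs k| + |t * f k| := abs_add_le _ _
      _ = (1 - t) * |fs k| + t * |f k| := by
          rw [abs_mul, abs_mul, abs_of_nonneg (by linarith : (0:ℝ) ≤ 1 - t),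
            abs_of_nonneg ht0.le]
      _ ≤ (1 - t) * c k + t * c k := by
          have h1 := mul_le_mul_of_nonneg_left (hfsK k) (by linarith : (0:ℝ) ≤ 1 - t)
          have h2 := mul_le_mul_of_nonneg_left (hf k) ht0.le
          linarith
      _ = c k := by ring
  have hcombq : ∀ i, 0 ≤ qs i + t * (q i - qs i) ∧ qs i + t * (q i - qs i) ≤ R := by
    intro i
    constructor
    · have heq : qs i + t * (q i - qs i) = (1 - t) * qs i + t * q i := by ring
      rw [heq]
      have h1 := mul_nonneg (by linarith : (0:ℝ) ≤ 1 - t) (hqs0 i)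
      have h2 := mul_nonneg ht0.le (hq i)
      linarith
    · have hqi : q i ≤ Sq := Finset.single_le_sum (fun i' _ => hq i') (Finset.mem_univ i)
      have h1 : t * q i ≤ t * Sq := mul_le_mul_of_nonneg_left hqi ht0.le
      have h2 : t * Sq ≤ (1/(1+Sq)) * Sq :=
        mul_le_mul_of_nonneg_right (min_le_right _ _) hSq0
      have h3 : (1/(1+Sq)) * Sq ≤ 1 := by
        rw [div_mul_eq_mul_div, one_mul, div_le_one (by positivity : (0:ℝ) < 1 + Sq)]
        linarith
      have h4 : t * qs i ≥ 0 := mul_nonneg ht0.le (hqs0 i)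
      have h5 := hqsR0 i
      simp only [hR]
      nlinarith [h1, h2, h3, h4, h5]
  have hcmax : Phic B H α β C (fun k => fs k + t * (f k - fs k))
      (fun i => qs i + t * (q i - qs i)) ≤ Phic B H α β C fs qs :=
    hmaxK _ _ hcombf hcombq
  have hconc := Phic_concave B H α β (fun j => (hβ j).le) hH0 C hC fs f qs q t ht0.le ht1
  have hfin : t * Phic B H α β C f q ≤ t * Phic B H α β C fs qs := by linarith
  exact le_of_mul_le_mul_left hfin ht0

end
end S17

/-- with affine prices `P j d = α j − β j d` (`α j > 0`, `β j > 0`), convex `C¹`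
costs, and A2, the networked Cournot game with market maker has a unique Nash equilibrium in
the variables `(q, Bf)`: there is a Nash equilibrium `(q*, f*)` maximizing the potential `Φ`
over the feasible set, and every Nash equilibrium `(q, f)` satisfies `q = q*` and
`Bf = Bf*`. -/
theorem stmt17 {n m l : ℕ}
    (B : Fin m → Fin l → ℝ) (H : Fin n → Fin m → ℝ)
    (c : Fin l → ℝ) (hc : ∀ k, 0 ≤ c k)
    (α β : Fin m → ℝ) (hα : ∀ j, 0 < α j) (hβ : ∀ j, 0 < β j)
    (C : Fin n → ℝ → ℝ)
    (hC : ∀ i, ConvexOn ℝ Set.univ (C i)) (hC1 : ∀ i, Differentiable ℝ (C i))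
    -- Assumption A2: each row of H has exactly one entry equal to 1, the rest 0
    (hH01 : ∀ i j, H i j = 0 ∨ H i j = 1)
    (hH1 : ∀ i, ∑ j, H i j = 1)
    (P : Fin m → ℝ → ℝ) (hP : ∀ j d, P j d = α j - β j * d) :
    ∃ (qs : Fin n → ℝ) (fs : Fin l → ℝ),
      (∀ i, 0 ≤ qs i) ∧ (∀ k, |fs k| ≤ c k) ∧
      -- (q*, f*) maximizes the potential Φ over the feasible set
      (∀ (q : Fin n → ℝ) (f : Fin l → ℝ), (∀ i, 0 ≤ q i) → (∀ k, |f k| ≤ c k) →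
          potentialΦ B H P C β f q ≤ potentialΦ B H P C β fs qs) ∧
      -- (q*, f*) is a Nash equilibrium
      (∀ (i : Fin n) (x : ℝ), 0 ≤ x →
          producerU B H P C i fs (Function.update qs i x) ≤ producerU B H P C i fs qs) ∧
      (∀ f : Fin l → ℝ, (∀ k, |f k| ≤ c k) →
          makerW B H P C f qs ≤ makerW B H P C fs qs) ∧
      -- uniqueness in the variables (q, Bf)
      (∀ (q : Fin n → ℝ) (f : Fin l → ℝ), (∀ i, 0 ≤ q i) → (∀ k, |f k| ≤ c k) →
        (∀ (i : Fin n) (x : ℝ), 0 ≤ x →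
            producerU B H P C i f (Function.update q i x) ≤ producerU B H P C i f q) →
        (∀ f' : Fin l → ℝ, (∀ k, |f' k| ≤ c k) →
            makerW B H P C f' q ≤ makerW B H P C f q) →
        q = qs ∧ (∀ j, ∑ k, B j k * f k = ∑ k, B j k * fs k)) := by
  obtain ⟨fs, qs, hqs0, hfsK, hmax⟩ :=
    S17.exists_max B H c hc α β hα hβ C hC hC1 hH01 hH1
  refine ⟨qs, fs, hqs0, hfsK, ?_, ?_, ?_, ?_⟩
  · intro q f hq hf
    rw [S17.potential_closed B H α β C P hP, S17.potential_closed B H α β C P hP]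
    exact hmax f q hq hf
  · intro i x hx
    have hupd0 : ∀ i', 0 ≤ Function.update qs i x i' := by
      intro i'
      by_cases h : i' = i
      · subst h; simpa using hx
      · simpa [Function.update_of_ne h] using hqs0 i'
    have hΦ : S17.Phic B H α β C fs (Function.update qs i x) ≤ S17.Phic B H α β C fs qs :=
      hmax fs _ hupd0 hfsK
    have hpot := S17.producer_pot B H α β C hH01 P hP i fs qs x
    linarith
  · intro f hf
    have hΦ : S17.Phic B H α β C f qs ≤ S17.Phic B H α β C fs qs := hmax f qs hqs0 hf
    have hpot := S17.maker_pot B H α β C P hP fs f qs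
    linarith
  · intro q f hq hf hprodN hmakerN
    have hqfmax := S17.nash_max B H c α β hβ C hC hH01 P hP f q hq hf hprodN hmakerN
    have h1 : S17.Phic B H α β C f q ≤ S17.Phic B H α β C fs qs := hmax f q hq hf
    have h2 : S17.Phic B H α β C fs qs ≤ S17.Phic B H α β C f q := hqfmax fs qs hqs0 hfsK
    have heq : S17.Phic B H α β C fs qs = S17.Phic B H α β C f q := le_antisymm h2 h1
    have hmidq : ∀ i, 0 ≤ q i + (1/2) * (qs i - q i) := by
      intro i
      have := hq i; have := hqs0 i
      linarith
    have hmidf : ∀ k, |f k + (1/2) * (fs k - f k)| ≤ c k := by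
      intro k
      have heqk : f k + (1/2) * (fs k - f k) = (1/2) * f k + (1/2) * fs k := by ring
      rw [heqk]
      calc |(1/2) * f k + (1/2) * fs k| ≤ |(1/2) * f k| + |(1/2) * fs k| := abs_add_le _ _
        _ = (1/2) * |f k| + (1/2) * |fs k| := by
            rw [abs_mul, abs_mul, abs_of_nonneg (by norm_num : (0:ℝ) ≤ 1/2)]
        _ ≤ (1/2) * c k + (1/2) * c k := by
            have h1 := mul_le_mul_of_nonneg_left (hf k) (by norm_num : (0:ℝ) ≤ 1/2)
            have h2 := mul_le_mul_of_nonneg_left (hfsK k) (by norm_num : (0:ℝ) ≤ 1/2)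
            linarith
        _ = c k := by ring
    have hmid : S17.Phic B H α β C (fun k => f k + (1/2) * (fs k - f k))
        (fun i => q i + (1/2) * (qs i - q i)) ≤ S17.Phic B H α β C f q :=
      hqfmax _ _ hmidq hmidf
    obtain ⟨hq_eq, hfB⟩ := S17.max_unique B H α β hβ hH01 hH1 C hC f fs q qs heq hmid
    exact ⟨hq_eq, fun j => (hfB j).symm⟩
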